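/- Let V be a vector space over ℚ and let P₋, P₊, C₋, C₊ : V → V be linear endomorphisms satisfying P₋∘C₊ − C₊∘P₋ = id_V and C₋∘P₊ − P₊∘C₋ = id_V, all other pairs among these four operators commuting. Let W = ker P₋ ∩ ker C₋, and assume the natural map W ⊗ ℚ[x,y] → V sending w ⊗ x^a y^b to P₊^a(C₊^b(w)) is a linear isomorphism (equivalently, V is the internal direct sum of the subspaces P₊^aC₊^b(W) over a,b ≥ 0, and each P₊^aC₊^b restricts to an injection on W). Then: (i) ker P₋ is the internal direct sum ⊕_{a≥0} P₊^a(W); (ii) the operator φ := P₊∘C₋ preserves ker P₋ and acts on the summand P₊^a(W) as multiplication by the scalar a; consequently ker P₋ is the direct sum of eigenspaces of φ with non-negative integer eigenvalues. -/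
import Mathlib

private lemma zero_of_indep_sum {V : Type*} [AddCommGroup V] [Module ℚ V] {ι : Type*}
    [DecidableEq ι] {p : ι → Submodule ℚ V} (h : iSupIndep p)
    (s : Finset ι) (c : ι → V) (hc : ∀ ab ∈ s, c ab ∈ p ab)
    (hsum : ∑ ab ∈ s, c ab = 0) : ∀ ab ∈ s, c ab = 0 := by
  intro ab₀ hab₀
  have hdisj := (h ab₀).eq_bot
  have hsplit : c ab₀ + ∑ ab ∈ s.erase ab₀, c ab = 0 := by
    rw [Finset.add_sum_erase s c hab₀]; exact hsum
  have hmem2 : c ab₀ ∈ ⨆ (j) (_ : j ≠ ab₀), p j := by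
    rw [eq_neg_of_add_eq_zero_left hsplit]
    exact neg_mem (Submodule.sum_mem _ fun ab hab =>
      Submodule.mem_iSup_of_mem ab (Submodule.mem_iSup_of_mem (Finset.ne_of_mem_erase hab)
        (hc ab (Finset.mem_of_mem_erase hab))))
  have : c ab₀ ∈ p ab₀ ⊓ ⨆ (j) (_ : j ≠ ab₀), p j := ⟨hc ab₀ hab₀, hmem2⟩
  rw [hdisj] at this
  simpa using this

section helpers
variable {V : Type*} [AddCommGroup V] [Module ℚ V] (Pm Pp Cm Cp : Module.End ℚ V)

private lemma keyPC (h1 : Pm * Cp - Cp * Pm = 1) :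
    ∀ b : ℕ, Pm * Cp ^ (b + 1) = Cp ^ (b + 1) * Pm + ((b : ℚ) + 1) • Cp ^ b := by
  have h1' : Pm * Cp = Cp * Pm + 1 := by rw [← h1]; abel
  intro b
  induction b with
  | zero => simpa using h1'
  | succ b ih =>
    have c1 : Pm * Cp ^ (b + 2) = (Pm * Cp ^ (b + 1)) * Cp := by
      rw [mul_assoc, ← pow_succ]
    rw [c1, ih, add_mul, smul_mul_assoc, ← pow_succ, mul_assoc, h1', mul_add, mul_one,
      ← mul_assoc, ← pow_succ]
    push_cast
    module
end helpers

/-- Abstract core of Proposition 2.6 ('etade'): with Rennemo-type operators on a `ℚ`-vector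
space `V`, if `V` is the internal direct sum of the subspaces `P₊^a C₊^b (W)` for
`W = ker P₋ ∩ ker C₋`, with each `P₊^a C₊^b` injective on `W`, then `ker P₋` is the internal
direct sum of the `P₊^a (W)`, and `φ = P₊ ∘ C₋` preserves `ker P₋` and acts on `P₊^a (W)` by
the scalar `a`. -/
theorem stmt_2 {V : Type*} [AddCommGroup V] [Module ℚ V]
    (Pm Pp Cm Cp : Module.End ℚ V)
    (h1 : Pm * Cp - Cp * Pm = 1)
    (h2 : Cm * Pp - Pp * Cm = 1)
    (hPmPp : Pm * Pp = Pp * Pm)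
    (hCmCp : Cm * Cp = Cp * Cm)
    (hPpCp : Pp * Cp = Cp * Pp)
    (hPmCm : Pm * Cm = Cm * Pm)
    (W : Submodule ℚ V) (hWdef : W = LinearMap.ker Pm ⊓ LinearMap.ker Cm)
    (hinternal : DirectSum.IsInternal
      (fun ab : ℕ × ℕ => Submodule.map (Pp ^ ab.1 * Cp ^ ab.2) W))
    (hinj : ∀ (a b : ℕ) (w : V), w ∈ W → (Pp ^ a * Cp ^ b) w = 0 → w = 0) :
    (iSupIndep (fun a : ℕ => Submodule.map (Pp ^ a) W) ∧
      (⨆ a : ℕ, Submodule.map (Pp ^ a) W) = LinearMap.ker Pm) ∧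
    (∀ x ∈ LinearMap.ker Pm, (Pp * Cm) x ∈ LinearMap.ker Pm) ∧
    (∀ (a : ℕ), ∀ x ∈ Submodule.map (Pp ^ a) W, (Pp * Cm) x = (a : ℚ) • x) := by
  classical
  set p : ℕ × ℕ → Submodule ℚ V := fun ab => Submodule.map (Pp ^ ab.1 * Cp ^ ab.2) W with hp
  have hW : ∀ w ∈ W, Pm w = 0 ∧ Cm w = 0 := by
    intro w hw
    rw [hWdef, Submodule.mem_inf, LinearMap.mem_ker, LinearMap.mem_ker] at hw
    exact hw
  have hcomm : Commute Pm Pp := hPmPp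
  have cPmPp : ∀ a : ℕ, Pm * Pp ^ a = Pp ^ a * Pm := fun a => hcomm.pow_right a
  -- F0 : pieces with b = 0 are the `Pp^a W`
  have F0 : ∀ a : ℕ, p (a, 0) = Submodule.map (Pp ^ a) W := by
    intro a; simp [hp]
  -- F1 : Pp^a W ⊆ ker Pm
  have F1 : ∀ a : ℕ, Submodule.map (Pp ^ a) W ≤ LinearMap.ker Pm := by
    rintro a x ⟨w, hw, rfl⟩
    rw [LinearMap.mem_ker, ← Module.End.mul_apply, cPmPp a, Module.End.mul_apply, (hW w hw).1,
      map_zero]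
  -- Pm on a piece (a, b+1)
  have Fcomp : ∀ (a b : ℕ) (w : V), w ∈ W →
      Pm ((Pp ^ a * Cp ^ (b + 1)) w) = ((b : ℚ) + 1) • ((Pp ^ a * Cp ^ b) w) := by
    intro a b w hw
    have : Pm * (Pp ^ a * Cp ^ (b + 1)) =
        (Pp ^ a * Cp ^ (b + 1)) * Pm + ((b : ℚ) + 1) • (Pp ^ a * Cp ^ b) := by
      rw [← mul_assoc, cPmPp a, mul_assoc, keyPC Pm Cp h1 b, mul_add, mul_smul_comm,
        ← mul_assoc]
    calc Pm ((Pp ^ a * Cp ^ (b + 1)) w) = (Pm * (Pp ^ a * Cp ^ (b + 1))) w := rfl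
      _ = ((Pp ^ a * Cp ^ (b + 1)) * Pm + ((b : ℚ) + 1) • (Pp ^ a * Cp ^ b)) w := by rw [this]
      _ = (Pp ^ a * Cp ^ (b + 1)) (Pm w) + ((b : ℚ) + 1) • ((Pp ^ a * Cp ^ b) w) := rfl
      _ = ((b : ℚ) + 1) • ((Pp ^ a * Cp ^ b) w) := by rw [(hW w hw).1, map_zero, zero_add]
  have F3 : ∀ (a b : ℕ) (x : V), x ∈ p (a, b + 1) → Pm x ∈ p (a, b) := by
    rintro a b x ⟨w, hw, rfl⟩
    rw [Fcomp a b w hw]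
    exact Submodule.smul_mem _ _ ⟨w, hw, rfl⟩
  have F2 : ∀ (a b : ℕ) (x : V), x ∈ p (a, b + 1) → Pm x = 0 → x = 0 := by
    rintro a b x ⟨w, hw, rfl⟩ hx
    rw [Fcomp a b w hw] at hx
    have hb : ((b : ℚ) + 1) ≠ 0 := by positivity
    have : (Pp ^ a * Cp ^ b) w = 0 := (smul_eq_zero.mp hx).resolve_left hb
    rw [hinj a b w hw this, map_zero]
  have hindep : iSupIndep p := hinternal.submodule_iSupIndep
  -- independence of the subfamily
  have indep1 : iSupIndep (fun a : ℕ => Submodule.map (Pp ^ a) W) := by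
    have : (fun a : ℕ => Submodule.map (Pp ^ a) W) = p ∘ (fun a : ℕ => (a, 0)) :=
      funext fun a => (F0 a).symm
    rw [this]
    exact hindep.comp fun a a' h => by simpa using congrArg Prod.fst h
  have key2 : ∀ a : ℕ, (Pp * Cm) * Pp ^ a = Pp ^ a * (Pp * Cm) + (a : ℚ) • Pp ^ a := by
    have h2' : Cm * Pp = Pp * Cm + 1 := by rw [← h2]; abel
    intro a
    induction a with
    | zero => simp
    | succ a ih =>
      have c1 : (Pp * Cm) * Pp ^ (a + 1) = ((Pp * Cm) * Pp ^ a) * Pp := by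
        rw [pow_succ, ← mul_assoc]
      have c2 : (Pp * Cm) * Pp = Pp * (Pp * Cm) + Pp := by
        rw [mul_assoc, h2', mul_add, mul_one]
      rw [c1, ih, add_mul, smul_mul_assoc, ← pow_succ, mul_assoc, c2, mul_add,
        ← mul_assoc, ← pow_succ]
      push_cast
      module
  -- part 3
  have part3 : ∀ (a : ℕ), ∀ x ∈ Submodule.map (Pp ^ a) W, (Pp * Cm) x = (a : ℚ) • x := by
    rintro a x ⟨w, hw, rfl⟩
    calc (Pp * Cm) ((Pp ^ a) w) = ((Pp * Cm) * Pp ^ a) w := rfl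
      _ = (Pp ^ a * (Pp * Cm) + (a : ℚ) • Pp ^ a) w := by rw [key2 a]
      _ = (Pp ^ a) (Pp (Cm w)) + (a : ℚ) • (Pp ^ a) w := rfl
      _ = (a : ℚ) • (Pp ^ a) w := by rw [(hW w hw).2, map_zero, map_zero, zero_add]
  -- part 2
  have part2 : ∀ x ∈ LinearMap.ker Pm, (Pp * Cm) x ∈ LinearMap.ker Pm := by
    intro x hx
    rw [LinearMap.mem_ker] at hx ⊢
    have : Pm * (Pp * Cm) = (Pp * Cm) * Pm := by
      rw [← mul_assoc, hPmPp, mul_assoc, hPmCm, ← mul_assoc]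
    calc Pm ((Pp * Cm) x) = (Pm * (Pp * Cm)) x := rfl
      _ = ((Pp * Cm) * Pm) x := by rw [this]
      _ = (Pp * Cm) (Pm x) := rfl
      _ = 0 := by rw [hx, map_zero]
  refine ⟨⟨indep1, le_antisymm (iSup_le F1) ?_⟩, part2, part3⟩
  -- ker Pm ≤ ⨆ Pp^a W
  intro x hx
  rw [LinearMap.mem_ker] at hx
  have hxtop : x ∈ ⨆ ab, p ab := by
    rw [hinternal.submodule_iSup_eq_top]; trivial
  rw [Submodule.mem_iSup_iff_exists_finsupp] at hxtop
  obtain ⟨f, hfmem, hfsum⟩ := hxtop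
  rw [Finsupp.sum] at hfsum
  -- support terms with b = 0 are killed by Pm
  have hb0 : ∀ ab : ℕ × ℕ, ab.2 = 0 → Pm (f ab) = 0 := by
    intro ab h0
    have hmem : f ab ∈ Submodule.map (Pp ^ ab.1) W := by
      rw [← F0 ab.1, show ((ab.1, 0) : ℕ × ℕ) = ab from Prod.ext rfl h0.symm]
      exact hfmem ab
    exact LinearMap.mem_ker.mp (F1 ab.1 hmem)
  -- the shifted sum
  set t : Finset (ℕ × ℕ) :=
    (f.support.filter (fun ab => ab.2 ≠ 0)).image (fun ab => (ab.1, ab.2 - 1)) with ht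
  set d : ℕ × ℕ → V := fun ab => Pm (f (ab.1, ab.2 + 1)) with hd
  have hdt : ∑ ab ∈ t, d ab = 0 := by
    rw [ht, Finset.sum_image]
    · have : ∀ ab ∈ f.support.filter (fun ab => ab.2 ≠ 0),
          d (ab.1, ab.2 - 1) = Pm (f ab) := by
        intro ab hab
        have h0 : ab.2 ≠ 0 := (Finset.mem_filter.mp hab).2
        exact congrArg Pm (congrArg f (Prod.ext rfl (by simp only []; omega)))
      rw [Finset.sum_congr rfl this, Finset.sum_filter_of_ne (by
        intro ab _ hne
        by_contra h0
        exact hne (hb0 ab (by simpa using h0)))]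
      rw [← map_sum, hfsum, hx]
    · intro a ha b hb hEq
      have ha2 : a.2 ≠ 0 := (Finset.mem_filter.mp ha).2
      have hb2 : b.2 ≠ 0 := (Finset.mem_filter.mp hb).2
      have e1 := congrArg Prod.fst hEq
      have e2 := congrArg Prod.snd hEq
      simp only at e1 e2
      exact Prod.ext e1 (by omega)
  have hdmem : ∀ ab ∈ t, d ab ∈ p ab := by
    intro ab hab
    exact F3 ab.1 ab.2 _ (hfmem (ab.1, ab.2 + 1))
  have hzero := zero_of_indep_sum hindep t d hdmem hdt
  -- now all components with b ≠ 0 vanish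
  have hsupp0 : ∀ ab ∈ f.support, ab.2 = 0 := by
    intro ab hab
    by_contra h0
    have habt : (ab.1, ab.2 - 1) ∈ t := Finset.mem_image.mpr
      ⟨ab, Finset.mem_filter.mpr ⟨hab, h0⟩, rfl⟩
    have hd0 : Pm (f (ab.1, ab.2 - 1 + 1)) = 0 := hzero _ habt
    have habe : (ab.1, ab.2 - 1 + 1) = ab := Prod.ext rfl (by omega)
    have hf0 : f (ab.1, ab.2 - 1 + 1) = 0 := F2 ab.1 (ab.2 - 1) _ (hfmem _) hd0
    rw [habe] at hf0
    exact Finsupp.mem_support_iff.mp hab hf0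
  rw [← hfsum]
  refine Submodule.sum_mem _ fun ab hab => ?_
  refine Submodule.mem_iSup_of_mem ab.1 ?_
  rw [← F0 ab.1, show ((ab.1, 0) : ℕ × ℕ) = ab from Prod.ext rfl (hsupp0 ab hab).symm]
  exact hfmem ab
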